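/- arXiv:2309.05379 — 2 statements merged into one kernel-verified Lean document; each statement's English description precedes it below -/
import Mathlib

section
/- The Conditional-Median mechanism is 11-approximate for the social cost: for every facility-location instance, if (w₁,w₂) is the output of the Conditional-Median mechanism, then for every feasible solution (y₁,y₂) one has SC(w₁,w₂) ≤ 11 · SC(y₁,y₂). -/
open Finset

/-- The smallest element of `C` minimizing the distance to `p`. -/
noncomputable def tloc (C : Finset ℝ) (p : ℝ) : ℝ :=
  WithTop.untopD 0 ((C.filter fun c => ∀ c' ∈ C, |p - c| ≤ |p - c'|).min)

/-- The smallest element of `C \ {tloc C p}` minimizing the distance to `p`. -/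
noncomputable def sloc (C : Finset ℝ) (p : ℝ) : ℝ :=
  tloc (C.erase (tloc C p)) p

/-- The `⌈n/2⌉`-th smallest element of a multiset of reals (0 if empty). -/
noncomputable def medOf (l : Multiset ℝ) : ℝ :=
  (l.sort (· ≤ ·)).getD ((Multiset.card l + 1) / 2 - 1) 0

/-- The median position of the agents in `S` with positions `x`. -/
noncomputable def medianPos (S : Finset ℕ) (x : ℕ → ℝ) : ℝ :=
  medOf (S.val.map x)

/-- The Conditional-Median mechanism, assuming facility 1 is (weakly) more popular. -/
noncomputable def condMedian (x : ℕ → ℝ) (N1 N2 : Finset ℕ) (C : Finset ℝ) : ℝ × ℝ :=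
  if (N1 ∩ N2).card ≤ (N1 \ N2).card then
    let m1 := medianPos (N1 \ N2) x
    let m2 := medianPos N2 x
    let w1 := tloc C m1
    (w1, if tloc C m2 ≠ w1 then tloc C m2 else sloc C m2)
  else
    let m12 := medianPos (N1 ∩ N2) x
    (tloc C m12, sloc C m12)

/-- The output of the Conditional-Median mechanism (roles swapped if `|N₂| > |N₁|`). -/
noncomputable def mechOutput (x : ℕ → ℝ) (N1 N2 : Finset ℕ) (C : Finset ℝ) : ℝ × ℝ :=
  if N2.card ≤ N1.card then condMedian x N1 N2 C
  else (condMedian x N2 N1 C).swap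

/-- The cost of agent `i` at solution `y`: the distance to the farthest approved facility. -/
noncomputable def cost (x : ℕ → ℝ) (N1 N2 : Finset ℕ) (i : ℕ) (y : ℝ × ℝ) : ℝ :=
  if i ∈ N1 then
    if i ∈ N2 then max |x i - y.1| |x i - y.2| else |x i - y.1|
  else |x i - y.2|

/-- The social cost. -/
noncomputable def SC (x : ℕ → ℝ) (N1 N2 N : Finset ℕ) (y : ℝ × ℝ) : ℝ :=
  ∑ i ∈ N, cost x N1 N2 i y

/-- The max cost. -/
noncomputable def MC (x : ℕ → ℝ) (N1 N2 N : Finset ℕ) (hN : N.Nonempty) (y : ℝ × ℝ) : ℝ :=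
  N.sup' hN fun i => cost x N1 N2 i y

/-! ### Auxiliary lemmas -/

lemma pair_abs (a b m q : ℝ) (h1 : a ≤ m) (h2 : m ≤ b) :
    |a - m| + |b - m| ≤ |a - q| + |b - q| := by
  rw [abs_of_nonpos (by linarith), abs_of_nonneg (by linarith)]
  cases abs_cases (a - q) <;> cases abs_cases (b - q) <;> linarith

lemma sorted_getD_mono {s : List ℝ} (hs : s.Pairwise (· ≤ ·)) {i j : ℕ}
    (hij : i ≤ j) (hj : j < s.length) : s.getD i 0 ≤ s.getD j 0 := by
  rw [List.getD_eq_getElem s 0 (lt_of_le_of_lt hij hj), List.getD_eq_getElem s 0 hj]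
  rcases eq_or_lt_of_le hij with rfl | h
  · exact le_refl _
  · exact List.pairwise_iff_getElem.mp hs i j (by omega) hj h

lemma list_sum_map_eq (f : ℝ → ℝ) (l : List ℝ) :
    (l.map f).sum = ∑ i ∈ Finset.range l.length, f (l.getD i 0) := by
  induction l with
  | nil => simp
  | cons a t ih =>
    rw [List.map_cons, List.sum_cons, List.length_cons, Finset.sum_range_succ']
    simp [ih, add_comm]

lemma med_list_opt (s : List ℝ) (hs : s.Pairwise (· ≤ ·)) (hn : s ≠ []) (q : ℝ) :
    ∑ i ∈ range s.length, |s.getD i 0 - s.getD ((s.length + 1) / 2 - 1) 0|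
      ≤ ∑ i ∈ range s.length, |s.getD i 0 - q| := by
  set n := s.length with hns
  set k := (n + 1) / 2 - 1 with hk
  have hn1 : 1 ≤ n := List.length_pos_iff.mpr hn
  have key : ∀ i ∈ range n,
      |s.getD i 0 - s.getD k 0| + |s.getD (n - 1 - i) 0 - s.getD k 0|
        ≤ |s.getD i 0 - q| + |s.getD (n - 1 - i) 0 - q| := by
    intro i hi
    rw [mem_range] at hi
    rcases le_total i (n - 1 - i) with h | h
    · exact pair_abs _ _ _ _ (sorted_getD_mono hs (by omega) (by omega))
        (sorted_getD_mono hs (by omega) (by omega))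
    · have := pair_abs (s.getD (n-1-i) 0) (s.getD i 0) (s.getD k 0) q
        (sorted_getD_mono hs (by omega) (by omega))
        (sorted_getD_mono hs (by omega) (by omega))
      linarith
  have refl1 := Finset.sum_range_reflect (fun i => |s.getD i 0 - s.getD k 0|) n
  have refl2 := Finset.sum_range_reflect (fun i => |s.getD i 0 - q|) n
  have := Finset.sum_le_sum key
  rw [Finset.sum_add_distrib, Finset.sum_add_distrib, refl1, refl2] at this
  linarith

lemma med_list_half (s : List ℝ) (hs : s.Pairwise (· ≤ ·)) (hn : s ≠ []) (q : ℝ) :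
    (s.length : ℝ) * |s.getD ((s.length + 1) / 2 - 1) 0 - q|
      ≤ 2 * ∑ i ∈ range s.length, |s.getD i 0 - q| := by
  set n := s.length with hns
  set k := (n + 1) / 2 - 1 with hk
  have hn1 : 1 ≤ n := List.length_pos_iff.mpr hn
  have hkn : k < n := by omega
  set m := s.getD k 0 with hm
  rcases le_total q m with h | h
  · have hsub : Finset.Ico k n ⊆ range n := by
      intro i hi; rw [mem_Ico] at hi; exact mem_range.mpr hi.2
    have step : ∀ i ∈ Finset.Ico k n, m - q ≤ |s.getD i 0 - q| := by
      intro i hi; rw [mem_Ico] at hi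
      have := sorted_getD_mono hs hi.1 (by omega)
      rw [abs_of_nonneg (by linarith)]; linarith
    have h1 : (Finset.Ico k n).card • (m - q) ≤ ∑ i ∈ Finset.Ico k n, |s.getD i 0 - q| := by
      rw [← Finset.sum_const]
      exact Finset.sum_le_sum step
    have h2 : ∑ i ∈ Finset.Ico k n, |s.getD i 0 - q| ≤ ∑ i ∈ range n, |s.getD i 0 - q| :=
      Finset.sum_le_sum_of_subset_of_nonneg hsub (fun i hi _ => abs_nonneg _)
    rw [Nat.card_Ico, nsmul_eq_mul] at h1
    have hcount : (n : ℝ) ≤ 2 * ((n - k : ℕ) : ℝ) := by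
      have : n ≤ 2 * (n - k) := by omega
      calc (n:ℝ) ≤ ((2*(n-k) : ℕ) : ℝ) := by exact_mod_cast this
        _ = 2 * ((n - k : ℕ) : ℝ) := by push_cast; ring
    rw [abs_of_nonneg (by linarith)]
    nlinarith [abs_nonneg (m - q)]
  · have hsub : range (k + 1) ⊆ range n := by
      intro i hi; rw [mem_range] at *; omega
    have step : ∀ i ∈ range (k + 1), q - m ≤ |s.getD i 0 - q| := by
      intro i hi; rw [mem_range] at hi
      have := sorted_getD_mono hs (Nat.lt_succ_iff.mp hi) hkn
      rw [abs_of_nonpos (by linarith)]; linarith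
    have h1 : (range (k+1)).card • (q - m) ≤ ∑ i ∈ range (k+1), |s.getD i 0 - q| := by
      rw [← Finset.sum_const]
      exact Finset.sum_le_sum step
    have h2 : ∑ i ∈ range (k+1), |s.getD i 0 - q| ≤ ∑ i ∈ range n, |s.getD i 0 - q| :=
      Finset.sum_le_sum_of_subset_of_nonneg hsub (fun i hi _ => abs_nonneg _)
    rw [Finset.card_range, nsmul_eq_mul] at h1
    have hcount : (n : ℝ) ≤ 2 * ((k + 1 : ℕ) : ℝ) := by
      have : n ≤ 2 * (k + 1) := by omega
      calc (n:ℝ) ≤ ((2*(k+1) : ℕ) : ℝ) := by exact_mod_cast this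
        _ = 2 * ((k + 1 : ℕ) : ℝ) := by push_cast; ring
    rw [abs_of_nonpos (by linarith)]
    nlinarith [abs_nonneg (m - q)]

lemma finset_sum_eq_list (S : Finset ℕ) (x : ℕ → ℝ) (f : ℝ → ℝ) :
    ∑ i ∈ S, f (x i) = ∑ i ∈ range ((S.val.map x).sort (· ≤ ·)).length,
      f (((S.val.map x).sort (· ≤ ·)).getD i 0) := by
  rw [← list_sum_map_eq]
  calc ∑ i ∈ S, f (x i) = ((S.val.map x).map f).sum := by
        rw [Finset.sum, Multiset.map_map]; rfl
    _ = (Multiset.map f ↑((S.val.map x).sort (· ≤ ·))).sum := by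
        rw [Multiset.sort_eq]
    _ = _ := by rw [Multiset.map_coe, Multiset.sum_coe]

lemma medianPos_eq (S : Finset ℕ) (x : ℕ → ℝ) :
    medianPos S x = ((S.val.map x).sort (· ≤ ·)).getD
      ((((S.val.map x).sort (· ≤ ·)).length + 1) / 2 - 1) 0 := by
  rw [medianPos, medOf, Multiset.length_sort]

lemma sort_ne_nil {S : Finset ℕ} (hS : S.Nonempty) (x : ℕ → ℝ) :
    ((S.val.map x).sort (· ≤ ·)) ≠ [] := by
  intro h
  have h0 := Multiset.length_sort (α := ℝ) (fun a b => a ≤ b) (s := S.val.map x)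
  rw [h] at h0
  simp only [List.length_nil, Multiset.card_map] at h0
  have : S.card = 0 := h0.symm
  exact hS.ne_empty (Finset.card_eq_zero.mp this)

lemma sort_length_card (S : Finset ℕ) (x : ℕ → ℝ) :
    ((S.val.map x).sort (· ≤ ·)).length = S.card := by
  rw [Multiset.length_sort, Multiset.card_map]; rfl

lemma medpos_opt (S : Finset ℕ) (hS : S.Nonempty) (x : ℕ → ℝ) (q : ℝ) :
    ∑ i ∈ S, |x i - medianPos S x| ≤ ∑ i ∈ S, |x i - q| := by
  rw [finset_sum_eq_list S x (fun a => |a - medianPos S x|),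
    finset_sum_eq_list S x (fun a => |a - q|), medianPos_eq]
  exact med_list_opt _ (Multiset.pairwise_sort _ _) (sort_ne_nil hS x) q

lemma medpos_half (S : Finset ℕ) (hS : S.Nonempty) (x : ℕ → ℝ) (q : ℝ) :
    (S.card : ℝ) * |medianPos S x - q| ≤ 2 * ∑ i ∈ S, |x i - q| := by
  rw [finset_sum_eq_list S x (fun a => |a - q|), medianPos_eq, ← sort_length_card S x]
  exact med_list_half _ (Multiset.pairwise_sort _ _) (sort_ne_nil hS x) q

lemma tloc_spec (C : Finset ℝ) (hC : C.Nonempty) (p : ℝ) :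
    tloc C p ∈ C ∧ ∀ c ∈ C, |p - tloc C p| ≤ |p - c| := by
  obtain ⟨c0, hc0, hmin⟩ := C.exists_min_image (fun c => |p - c|) hC
  set F := C.filter fun c => ∀ c' ∈ C, |p - c| ≤ |p - c'| with hFdef
  have hF : F.Nonempty := ⟨c0, Finset.mem_filter.mpr ⟨hc0, hmin⟩⟩
  have htl : tloc C p = F.min' hF := by
    rw [tloc, ← hFdef, ← Finset.coe_min' hF]
    rfl
  have hmem := F.min'_mem hF
  rw [← htl] at hmem
  rw [hFdef, Finset.mem_filter] at hmem
  exact hmem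

lemma sloc_spec (C : Finset ℝ) (hC : 2 ≤ C.card) (p : ℝ) :
    sloc C p ∈ C ∧ sloc C p ≠ tloc C p ∧
      ∀ c ∈ C, c ≠ tloc C p → |p - sloc C p| ≤ |p - c| := by
  have hCne : C.Nonempty := Finset.card_pos.mp (by omega)
  have htmem := (tloc_spec C hCne p).1
  have herase : (C.erase (tloc C p)).Nonempty := by
    rw [← Finset.card_pos, Finset.card_erase_of_mem htmem]; omega
  obtain ⟨hmem, hmin⟩ := tloc_spec (C.erase (tloc C p)) herase p
  rw [← sloc] at hmem hmin
  refine ⟨Finset.mem_of_mem_erase hmem, Finset.ne_of_mem_erase hmem, ?_⟩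
  intro c hc hne
  exact hmin c (Finset.mem_erase.mpr ⟨hne, hc⟩)

lemma sum_abs_shift (S : Finset ℕ) (x : ℕ → ℝ) (p q : ℝ) :
    ∑ i ∈ S, |x i - p| ≤ (∑ i ∈ S, |x i - q|) + (S.card : ℝ) * |q - p| := by
  have h := Finset.sum_le_sum (fun i (_ : i ∈ S) => abs_sub_le (x i) q p)
  rwa [Finset.sum_add_distrib, Finset.sum_const, nsmul_eq_mul] at h

lemma SC_split (x : ℕ → ℝ) (N1 N2 N : Finset ℕ) (hU : N1 ∪ N2 = N) (y : ℝ × ℝ) :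
    SC x N1 N2 N y = ∑ i ∈ N1 \ N2, |x i - y.1| + ∑ i ∈ N2 \ N1, |x i - y.2|
      + ∑ i ∈ N1 ∩ N2, max |x i - y.1| |x i - y.2| := by
  have hN : N = (N1 \ N2) ∪ ((N2 \ N1) ∪ (N1 ∩ N2)) := by
    rw [← hU]; ext i; simp only [Finset.mem_union, Finset.mem_sdiff, Finset.mem_inter]; tauto
  have hd1 : Disjoint (N1 \ N2) ((N2 \ N1) ∪ (N1 ∩ N2)) := by
    rw [Finset.disjoint_left]
    intro i hi hij
    simp only [Finset.mem_union, Finset.mem_sdiff, Finset.mem_inter] at hi hij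
    tauto
  have hd2 : Disjoint (N2 \ N1) (N1 ∩ N2) := by
    rw [Finset.disjoint_left]
    intro i hi hij
    simp only [Finset.mem_sdiff, Finset.mem_inter] at hi hij
    tauto
  rw [SC, hN, Finset.sum_union hd1, Finset.sum_union hd2]
  have e1 : ∀ i ∈ N1 \ N2, cost x N1 N2 i y = |x i - y.1| := by
    intro i hi
    rw [Finset.mem_sdiff] at hi
    simp [cost, hi.1, hi.2]
  have e2 : ∀ i ∈ N2 \ N1, cost x N1 N2 i y = |x i - y.2| := by
    intro i hi
    rw [Finset.mem_sdiff] at hi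
    simp [cost, hi.2]
  have e3 : ∀ i ∈ N1 ∩ N2, cost x N1 N2 i y = max |x i - y.1| |x i - y.2| := by
    intro i hi
    rw [Finset.mem_inter] at hi
    simp [cost, hi.1, hi.2]
  rw [Finset.sum_congr rfl e1, Finset.sum_congr rfl e2, Finset.sum_congr rfl e3]
  ring

lemma key_lemma (N N1 N2 : Finset ℕ) (x : ℕ → ℝ) (C : Finset ℝ)
    (h1 : N1.Nonempty) (h2 : N2.Nonempty) (hU : N1 ∪ N2 = N) (hC : 2 ≤ C.card)
    (hcard : N2.card ≤ N1.card) (y1 y2 : ℝ) (hy1 : y1 ∈ C) (hy2 : y2 ∈ C) (hy : y1 ≠ y2) :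
    SC x N1 N2 N (condMedian x N1 N2 C) ≤ 11 * SC x N1 N2 N (y1, y2) := by
  have hCne : C.Nonempty := Finset.card_pos.mp (by omega)
  set A := N1 \ N2 with hA
  set B := N2 \ N1 with hB
  set I := N1 ∩ N2 with hI
  have hcard1 : A.card + I.card = N1.card := Finset.card_sdiff_add_card_inter N1 N2
  have hcard2 : B.card + I.card = N2.card := by
    rw [hB, hI, Finset.inter_comm]
    exact Finset.card_sdiff_add_card_inter N2 N1
  have hBA : B.card ≤ A.card := by omega
  set a := ∑ i ∈ A, |x i - y1| with ha_def
  set b := ∑ i ∈ B, |x i - y2| with hb_def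
  set c := ∑ i ∈ I, max |x i - y1| |x i - y2| with hc_def
  have ha : 0 ≤ a := Finset.sum_nonneg fun i _ => abs_nonneg _
  have hb : 0 ≤ b := Finset.sum_nonneg fun i _ => abs_nonneg _
  have hc' : 0 ≤ c := Finset.sum_nonneg fun i _ => le_max_iff.mpr (Or.inl (abs_nonneg _))
  have hIy1 : ∑ i ∈ I, |x i - y1| ≤ c :=
    Finset.sum_le_sum fun i _ => le_max_left _ _
  have hIy2 : ∑ i ∈ I, |x i - y2| ≤ c :=
    Finset.sum_le_sum fun i _ => le_max_right _ _
  have hN2split : ∀ f : ℕ → ℝ, ∑ i ∈ N2, f i = ∑ i ∈ B, f i + ∑ i ∈ I, f i := by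
    intro f
    have hd : Disjoint B I := by
      rw [Finset.disjoint_left]
      intro i hi hij
      rw [hB, Finset.mem_sdiff] at hi
      rw [hI, Finset.mem_inter] at hij
      exact hi.2 hij.1
    rw [← Finset.sum_union hd]
    apply Finset.sum_congr _ (fun _ _ => rfl)
    ext i
    simp only [Finset.mem_union, hB, hI, Finset.mem_sdiff, Finset.mem_inter]
    tauto
  have hRHS : SC x N1 N2 N (y1, y2) = a + b + c := SC_split x N1 N2 N hU (y1, y2)
  rw [hRHS]
  by_cases hc1 : I.card ≤ A.card
  · -- Case 1
    have hAne : A.Nonempty := by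
      rw [← Finset.card_pos]
      rcases Nat.eq_zero_or_pos A.card with h0 | h
      · exfalso
        have : N1.card = 0 := by omega
        exact h1.ne_empty (Finset.card_eq_zero.mp this)
      · exact h
    set m1 := medianPos A x with hm1
    set m2 := medianPos N2 x with hm2
    set w1 := tloc C m1 with hw1
    have hmech : condMedian x N1 N2 C
        = (w1, if tloc C m2 ≠ w1 then tloc C m2 else sloc C m2) := by
      rw [condMedian, if_pos hc1]
    set w2 := if tloc C m2 ≠ w1 then tloc C m2 else sloc C m2 with hw2def
    rw [hmech, SC_split x N1 N2 N hU]
    simp only []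
    -- basic facts
    obtain ⟨hw1C, hw1min⟩ := tloc_spec C hCne m1
    have hm1w1 : |m1 - w1| ≤ |m1 - y1| := hw1min y1 hy1
    have half1 : (A.card : ℝ) * |m1 - y1| ≤ 2 * a := medpos_half A hAne x y1
    have opt1 : ∑ i ∈ A, |x i - m1| ≤ a := medpos_opt A hAne x y1
    have optN2 : ∑ i ∈ N2, |x i - m2| ≤ b + c := by
      have h := medpos_opt N2 h2 x y2
      have h2' : ∑ i ∈ N2, |x i - y2| ≤ b + c := by
        rw [hN2split (fun i => |x i - y2|)]
        linarith
      linarith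
    have halfN2 : (N2.card : ℝ) * |m2 - y2| ≤ 2 * (b + c) := by
      have h := medpos_half N2 h2 x y2
      have h2' : ∑ i ∈ N2, |x i - y2| ≤ b + c := by
        rw [hN2split (fun i => |x i - y2|)]
        linarith
      linarith
    -- bound on |m2 - w2|
    have hw2bound : |m2 - w2| ≤ |m2 - y2| ∨ (y2 = w1 ∧ |m2 - w2| ≤ |m2 - y1|) := by
      by_cases hne : tloc C m2 ≠ w1
      · left
        rw [hw2def, if_pos hne]
        exact (tloc_spec C hCne m2).2 y2 hy2
      · push_neg at hne
        rw [hw2def, if_neg (by simpa using hne)]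
        by_cases hy2w : y2 = w1
        · right
          refine ⟨hy2w, (sloc_spec C hC m2).2.2 y1 hy1 ?_⟩
          rw [hne, ← hy2w]
          exact hy
        · left
          refine (sloc_spec C hC m2).2.2 y2 hy2 ?_
          rw [hne]
          exact hy2w
    -- sum bounds
    have hSA : ∑ i ∈ A, |x i - w1| ≤ 3 * a := by
      have h := sum_abs_shift A x w1 m1
      have hmul : (A.card : ℝ) * |m1 - w1| ≤ 2 * a := by
        calc (A.card : ℝ) * |m1 - w1| ≤ (A.card : ℝ) * |m1 - y1| :=
              mul_le_mul_of_nonneg_left hm1w1 (Nat.cast_nonneg _)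
          _ ≤ 2 * a := half1
      linarith
    have hy1w1 : |y1 - w1| ≤ 2 * |m1 - y1| := by
      have h := abs_sub_le y1 m1 w1
      rw [abs_sub_comm y1 m1] at h
      linarith
    have hSI1 : ∑ i ∈ I, |x i - w1| ≤ c + 4 * a := by
      have h := sum_abs_shift I x w1 y1
      have hmul : (I.card : ℝ) * |y1 - w1| ≤ 4 * a := by
        have hcast : (I.card : ℝ) ≤ (A.card : ℝ) := Nat.cast_le.mpr hc1
        have h1' : (I.card : ℝ) * |y1 - w1| ≤ (A.card : ℝ) * (2 * |m1 - y1|) := by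
          apply mul_le_mul hcast hy1w1 (abs_nonneg _) (Nat.cast_nonneg _)
        linarith
      linarith
    have hSN2 : ∑ i ∈ N2, |x i - w2| ≤ 3 * (b + c) + 4 * a + 2 * c := by
      have h := sum_abs_shift N2 x w2 m2
      have hN2cast : (N2.card : ℝ) = (B.card : ℝ) + (I.card : ℝ) := by
        exact_mod_cast congrArg (Nat.cast (R := ℝ)) hcard2.symm
      rcases hw2bound with hgood | ⟨hy2w, hbad⟩
      · have hmul : (N2.card : ℝ) * |m2 - w2| ≤ 2 * (b + c) := by
          calc (N2.card : ℝ) * |m2 - w2| ≤ (N2.card : ℝ) * |m2 - y2| :=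
                mul_le_mul_of_nonneg_left hgood (Nat.cast_nonneg _)
            _ ≤ 2 * (b + c) := halfN2
        linarith
      · -- bad case : y2 = w1
        have hy1y2 : |y1 - y2| ≤ 2 * |m1 - y1| := by
          rw [hy2w]
          exact hy1w1
        have hIc : (I.card : ℝ) * |y1 - y2| ≤ 2 * c := by
          have per : ∀ i ∈ I, |y1 - y2| ≤ 2 * max |x i - y1| |x i - y2| := by
            intro i hi
            have h3 := abs_sub_le y1 (x i) y2
            rw [abs_sub_comm y1 (x i)] at h3
            have l1 : |x i - y1| ≤ max |x i - y1| |x i - y2| := le_max_left _ _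
            have l2 : |x i - y2| ≤ max |x i - y1| |x i - y2| := le_max_right _ _
            linarith
          have hsum := Finset.sum_le_sum per
          rw [Finset.sum_const, nsmul_eq_mul, ← Finset.mul_sum] at hsum
          linarith
        have hBc : (B.card : ℝ) * |y1 - y2| ≤ 4 * a := by
          have hcast : (B.card : ℝ) ≤ (A.card : ℝ) := Nat.cast_le.mpr hBA
          have h1' : (B.card : ℝ) * |y1 - y2| ≤ (A.card : ℝ) * (2 * |m1 - y1|) :=
            mul_le_mul hcast hy1y2 (abs_nonneg _) (Nat.cast_nonneg _)
          linarith
        have hmw2 : |m2 - w2| ≤ |m2 - y2| + |y1 - y2| := by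
          have h3 := abs_sub_le m2 y2 y1
          rw [abs_sub_comm y2 y1] at h3
          linarith
        have hmul : (N2.card : ℝ) * |m2 - w2| ≤ 2 * (b + c) + 4 * a + 2 * c := by
          have step1 : (N2.card : ℝ) * |m2 - w2|
              ≤ (N2.card : ℝ) * |m2 - y2| + (N2.card : ℝ) * |y1 - y2| := by
            have := mul_le_mul_of_nonneg_left hmw2 (Nat.cast_nonneg (α := ℝ) N2.card)
            linarith [this]
          have step2 : (N2.card : ℝ) * |y1 - y2|
              = (B.card : ℝ) * |y1 - y2| + (I.card : ℝ) * |y1 - y2| := by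
            rw [hN2cast]; ring
          linarith
        linarith
    -- combine
    have hImax : ∑ i ∈ I, max |x i - w1| |x i - w2|
        ≤ ∑ i ∈ I, |x i - w1| + ∑ i ∈ I, |x i - w2| := by
      rw [← Finset.sum_add_distrib]
      apply Finset.sum_le_sum
      intro i hi
      exact max_le (by linarith [abs_nonneg (x i - w2)]) (by linarith [abs_nonneg (x i - w1)])
    have hfinal : ∑ i ∈ B, |x i - w2| + ∑ i ∈ I, |x i - w2| ≤ 3 * (b + c) + 4 * a + 2 * c := by
      rw [← hN2split (fun i => |x i - w2|)]
      exact hSN2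
    linarith
  · -- Case 2
    push_neg at hc1
    have hIne : I.Nonempty := Finset.card_pos.mp (by omega)
    set m := medianPos I x with hm
    set w1 := tloc C m with hw1
    set w2 := sloc C m with hw2
    have hmech : condMedian x N1 N2 C = (w1, w2) := by
      rw [condMedian, if_neg (by rw [← hA, ← hI]; omega)]
    rw [hmech, SC_split x N1 N2 N hU]
    simp only []
    obtain ⟨hw1C, hw1min⟩ := tloc_spec C hCne m
    obtain ⟨hw2C, hw2ne, hw2min⟩ := sloc_spec C hC m
    set u := |m - y1| with hu
    set v := |m - y2| with hv
    have hd1u : |m - w1| ≤ u := hw1min y1 hy1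
    have hd1v : |m - w1| ≤ v := hw1min y2 hy2
    have hd2 : |m - w2| ≤ max u v := by
      by_cases hcase : y1 = w1
      · have : y2 ≠ tloc C m := by rw [← hw1, ← hcase]; exact fun h => hy h.symm
        exact le_trans (hw2min y2 hy2 this) (le_max_right _ _)
      · have : y1 ≠ tloc C m := by rw [← hw1]; exact hcase
        exact le_trans (hw2min y1 hy1 this) (le_max_left _ _)
    have halfu : (I.card : ℝ) * u ≤ 2 * c := by
      have h := medpos_half I hIne x y1
      linarith
    have halfv : (I.card : ℝ) * v ≤ 2 * c := by
      have h := medpos_half I hIne x y2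
      linarith
    have halfM : (I.card : ℝ) * max u v ≤ 2 * c := by
      rcases max_cases u v with ⟨hEq, _⟩ | ⟨hEq, _⟩ <;> rw [hEq]
      · exact halfu
      · exact halfv
    have optI : ∑ i ∈ I, |x i - m| ≤ c := by
      have h := medpos_opt I hIne x y1
      linarith
    have hSI : ∑ i ∈ I, max |x i - w1| |x i - w2| ≤ 3 * c := by
      have per : ∀ i ∈ I, max |x i - w1| |x i - w2| ≤ |x i - m| + max u v := by
        intro i hi
        apply max_le
        · have h3 := abs_sub_le (x i) m w1
          have : |m - w1| ≤ max u v := le_trans hd1u (le_max_left _ _)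
          linarith
        · have h3 := abs_sub_le (x i) m w2
          linarith
      have hsum := Finset.sum_le_sum per
      rw [Finset.sum_add_distrib, Finset.sum_const, nsmul_eq_mul] at hsum
      linarith
    have hAI : (A.card : ℝ) ≤ (I.card : ℝ) := by
      exact_mod_cast Nat.cast_le.mpr (le_of_lt hc1)
    have hBI : (B.card : ℝ) ≤ (I.card : ℝ) := by
      exact_mod_cast Nat.cast_le.mpr (le_of_lt (lt_of_le_of_lt hBA hc1))
    have hSA : ∑ i ∈ A, |x i - w1| ≤ a + 4 * c := by
      have h := sum_abs_shift A x w1 y1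
      have hy1w1 : |y1 - w1| ≤ 2 * u := by
        have h3 := abs_sub_le y1 m w1
        rw [abs_sub_comm y1 m] at h3
        linarith
      have hmul : (A.card : ℝ) * |y1 - w1| ≤ 4 * c := by
        have h1' : (A.card : ℝ) * |y1 - w1| ≤ (I.card : ℝ) * (2 * u) :=
          mul_le_mul hAI hy1w1 (abs_nonneg _) (Nat.cast_nonneg _)
        linarith
      linarith
    have hSB : ∑ i ∈ B, |x i - w2| ≤ b + 4 * c := by
      have h := sum_abs_shift B x w2 y2
      have hy2w2 : |y2 - w2| ≤ 2 * max u v := by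
        have h3 := abs_sub_le y2 m w2
        rw [abs_sub_comm y2 m] at h3
        have : v ≤ max u v := le_max_right _ _
        linarith
      have hmul : (B.card : ℝ) * |y2 - w2| ≤ 4 * c := by
        have h1' : (B.card : ℝ) * |y2 - w2| ≤ (I.card : ℝ) * (2 * max u v) :=
          mul_le_mul hBI hy2w2 (abs_nonneg _) (Nat.cast_nonneg _)
        linarith
      linarith
    linarith

lemma SC_symm (x : ℕ → ℝ) (N1 N2 N : Finset ℕ) (hU : N1 ∪ N2 = N) (y : ℝ × ℝ) :
    SC x N1 N2 N y = SC x N2 N1 N y.swap := by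
  apply Finset.sum_congr rfl
  intro i hi
  have hmem : i ∈ N1 ∨ i ∈ N2 := by
    rw [← Finset.mem_union, hU]
    exact hi
  rcases Classical.em (i ∈ N1) with h1 | h1 <;> rcases Classical.em (i ∈ N2) with h2 | h2
  · simp [cost, h1, h2, Prod.swap, max_comm]
  · simp [cost, h1, h2, Prod.swap]
  · simp [cost, h1, h2, Prod.swap]
  · tauto

/-- The Conditional-Median mechanism is 11-approximate for the social cost. -/
theorem conditionalMedian_socialCost_eleven_approx
    (N N1 N2 : Finset ℕ) (x : ℕ → ℝ) (C : Finset ℝ)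
    (hN : N.Nonempty) (h1 : N1.Nonempty) (h2 : N2.Nonempty)
    (hU : N1 ∪ N2 = N) (hC : 2 ≤ C.card)
    (y1 y2 : ℝ) (hy1 : y1 ∈ C) (hy2 : y2 ∈ C) (hy : y1 ≠ y2) :
    SC x N1 N2 N (mechOutput x N1 N2 C) ≤ 11 * SC x N1 N2 N (y1, y2) := by
  rw [mechOutput]
  by_cases houter : N2.card ≤ N1.card
  · rw [if_pos houter]
    exact key_lemma N N1 N2 x C h1 h2 hU hC houter y1 y2 hy1 hy2 hy
  · rw [if_neg houter]
    have hU' : N2 ∪ N1 = N := by rw [Finset.union_comm]; exact hU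
    rw [SC_symm x N1 N2 N hU, SC_symm x N1 N2 N hU (y1, y2), Prod.swap_swap]
    exact key_lemma N N2 N1 x C h2 h1 hU' hC (le_of_not_ge houter) y2 y1 hy2 hy1 hy.symm
end

section
/- The social-cost approximation ratio 11 of the Conditional-Median mechanism is tight: for every δ ∈ (0,1) there exists a facility-location instance and a feasible solution (y₁,y₂) with SC(y₁,y₂) > 0 such that the output (w₁,w₂) of the Conditional-Median mechanism on this instance satisfies SC(w₁,w₂) ≥ (11 − δ) · SC(y₁,y₂). -/
open Finset

/-! Auxiliary lemmas for the tightness construction. -/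

lemma tloc_spec_s2 {C : Finset ℝ} {p a : ℝ} (ha : a ∈ C)
    (h1 : ∀ c ∈ C, |p - a| ≤ |p - c|)
    (h2 : ∀ c ∈ C, (∀ c' ∈ C, |p - c| ≤ |p - c'|) → a ≤ c) :
    tloc C p = a := by
  unfold tloc
  have haf : a ∈ C.filter (fun c => ∀ c' ∈ C, |p - c| ≤ |p - c'|) :=
    Finset.mem_filter.mpr ⟨ha, h1⟩
  have hne : (C.filter (fun c => ∀ c' ∈ C, |p - c| ≤ |p - c'|)).Nonempty := ⟨a, haf⟩
  rw [← Finset.coe_min' hne, WithTop.untopD_coe]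
  refine le_antisymm (Finset.min'_le _ _ haf) (Finset.le_min' _ hne _ ?_)
  intro b hb
  obtain ⟨hbC, hbmin⟩ := Finset.mem_filter.mp hb
  exact h2 b hbC hbmin

lemma getD_replicate_append {a : ℝ} {k n : ℕ} (h : k < n) (l : List ℝ) :
    (List.replicate n a ++ l).getD k 0 = a := by
  induction n generalizing k with
  | zero => omega
  | succ n ih =>
    rw [List.replicate_succ, List.cons_append]
    cases k with
    | zero => rfl
    | succ k => rw [List.getD_cons_succ]; exact ih (by omega)

lemma sorted_two_replicates {a b : ℝ} (hab : a ≤ b) (n n' : ℕ) :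
    List.Pairwise (· ≤ ·) (List.replicate n a ++ List.replicate n' b) := by
  rw [List.pairwise_append]
  refine ⟨List.pairwise_replicate.mpr (Or.inr le_rfl),
    List.pairwise_replicate.mpr (Or.inr le_rfl), ?_⟩
  intro x hx y hy
  rw [List.eq_of_mem_replicate hx, List.eq_of_mem_replicate hy]
  exact hab

/-- Median of `n+1` copies of `0` and `n+1` copies of `-1`. -/
lemma medOf_two_replicates (n : ℕ) :
    medOf (Multiset.replicate (n+1) (0:ℝ) + Multiset.replicate (n+1) (-1:ℝ)) = -1 := by
  unfold medOf
  have hsort : (Multiset.replicate (n+1) (0:ℝ) + Multiset.replicate (n+1) (-1:ℝ)).sort (· ≤ ·)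
      = List.replicate (n+1) (-1:ℝ) ++ List.replicate (n+1) 0 := by
    refine List.Perm.eq_of_pairwise' (Multiset.pairwise_sort _ _)
      (sorted_two_replicates (by norm_num) _ _) ?_
    rw [← Multiset.coe_eq_coe, Multiset.sort_eq, ← Multiset.coe_add,
      Multiset.coe_replicate, Multiset.coe_replicate]
    exact add_comm _ _
  rw [hsort]
  have hcard : Multiset.card (Multiset.replicate (n+1) (0:ℝ) + Multiset.replicate (n+1) (-1:ℝ))
      = 2*n+2 := by
    rw [Multiset.card_add, Multiset.card_replicate, Multiset.card_replicate]; omega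
  rw [hcard]
  have hidx : (2*n+2+1)/2 - 1 = n := by omega
  rw [hidx]
  exact getD_replicate_append (by omega) _

lemma sum_four_blocks (f : ℕ → ℝ) (a b c d e : ℕ)
    (hab : a ≤ b) (hbc : b ≤ c) (hcd : c ≤ d) (hde : d ≤ e) :
    ∑ i ∈ Finset.Ico a e, f i =
      (∑ i ∈ Finset.Ico a b, f i) + (∑ i ∈ Finset.Ico b c, f i) +
      (∑ i ∈ Finset.Ico c d, f i) + (∑ i ∈ Finset.Ico d e, f i) := by
  rw [← Finset.sum_Ico_consecutive f hab (le_trans hbc (le_trans hcd hde)),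
    ← Finset.sum_Ico_consecutive f hbc (le_trans hcd hde),
    ← Finset.sum_Ico_consecutive f hcd hde]
  ring

namespace CMTight

noncomputable def xx (m : ℕ) : ℕ → ℝ := fun i => if i < 5*m+3 then 0 else -1
def NN1 (m : ℕ) : Finset ℕ := Finset.range (2*m+1) ∪ Finset.Ico (4*m+2) (6*m+4)
def NN2 (m : ℕ) : Finset ℕ := Finset.Ico (2*m+1) (6*m+4)
noncomputable def CC (ε : ℝ) : Finset ℝ := {-2, -2+ε, 0, ε}

variable {m : ℕ} {ε : ℝ}

lemma tlocA (hε0 : 0 < ε) (hε1 : ε < 1/2) : tloc (CC ε) (-1) = -2 + ε := by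
  apply tloc_spec_s2
  · simp [CC]
  · intro c hc
    simp only [CC, Finset.mem_insert, Finset.mem_singleton] at hc
    have e1 : |(-1:ℝ) - (-2 + ε)| = 1 - ε := by
      rw [show (-1:ℝ) - (-2 + ε) = 1 - ε by ring, abs_of_nonneg (by linarith)]
    rcases hc with rfl | rfl | rfl | hce
    · rw [e1, show (-1:ℝ) - (-2) = 1 by ring, abs_one]; linarith
    · exact le_rfl
    · rw [e1, show (-1:ℝ) - 0 = -1 by ring, abs_neg, abs_one]; linarith
    · rw [hce, e1, show (-1:ℝ) - ε = -(1 + ε) by ring, abs_neg,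
        abs_of_nonneg (by linarith)]; linarith
  · intro c hc hcmin
    simp only [CC, Finset.mem_insert, Finset.mem_singleton] at hc
    rcases hc with rfl | rfl | rfl | hce
    · exfalso
      have := hcmin (-2 + ε) (by simp [CC])
      rw [show (-1:ℝ) - (-2) = 1 by ring, abs_one,
        show (-1:ℝ) - (-2 + ε) = 1 - ε by ring, abs_of_nonneg (by linarith)] at this
      linarith
    · exact le_rfl
    · linarith
    · rw [hce]; linarith

lemma slocA (hε0 : 0 < ε) (hε1 : ε < 1/2) : sloc (CC ε) (-1) = -2 := by
  unfold sloc
  rw [tlocA hε0 hε1]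
  apply tloc_spec_s2
  · exact Finset.mem_erase.mpr ⟨by intro h; apply absurd (by linarith : ε = 0) hε0.ne',
      by simp [CC]⟩
  · intro c hc
    obtain ⟨hne, hcC⟩ := Finset.mem_erase.mp hc
    simp only [CC, Finset.mem_insert, Finset.mem_singleton] at hcC
    have e2 : |(-1:ℝ) - (-2)| = 1 := by rw [show (-1:ℝ) - (-2) = 1 by ring, abs_one]
    rcases hcC with rfl | rfl | rfl | hce
    · exact le_rfl
    · exact absurd rfl hne
    · rw [e2, show (-1:ℝ) - 0 = -1 by ring, abs_neg, abs_one]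
    · rw [hce, e2, show (-1:ℝ) - ε = -(1 + ε) by ring, abs_neg,
        abs_of_nonneg (by linarith)]; linarith
  · intro c hc _
    obtain ⟨_, hcC⟩ := Finset.mem_erase.mp hc
    simp only [CC, Finset.mem_insert, Finset.mem_singleton] at hcC
    rcases hcC with rfl | rfl | rfl | hce
    · exact le_rfl
    · linarith
    · linarith
    · rw [hce]; linarith

lemma medA (m : ℕ) : medianPos (Finset.Ico (4*m+2) (6*m+4)) (xx m) = -1 := by
  have hdisj : Disjoint (Finset.Ico (4*m+2) (5*m+3)) (Finset.Ico (5*m+3) (6*m+4)) := by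
    simp only [Finset.disjoint_left, Finset.mem_Ico]
    intro i hi
    omega
  have hsplit : Finset.Ico (4*m+2) (6*m+4)
      = (Finset.Ico (4*m+2) (5*m+3)).disjUnion (Finset.Ico (5*m+3) (6*m+4)) hdisj := by
    rw [Finset.disjUnion_eq_union, Finset.Ico_union_Ico_eq_Ico (by omega) (by omega)]
  unfold medianPos
  rw [hsplit]
  have hval : ((Finset.Ico (4*m+2) (5*m+3)).disjUnion (Finset.Ico (5*m+3) (6*m+4)) hdisj).val
      = (Finset.Ico (4*m+2) (5*m+3)).val + (Finset.Ico (5*m+3) (6*m+4)).val := rfl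
  rw [hval, Multiset.map_add]
  have h1 : (Finset.Ico (4*m+2) (5*m+3)).val.map (xx m)
      = Multiset.replicate (m+1) (0:ℝ) := by
    rw [Multiset.map_congr rfl (g := fun _ => (0:ℝ)) ?_, Multiset.map_const']
    · congr 1
      have : (Finset.Ico (4*m+2) (5*m+3)).val.card = (Finset.Ico (4*m+2) (5*m+3)).card := rfl
      rw [this, Nat.card_Ico]; omega
    · intro i hi
      have hi' : i ∈ Finset.Ico (4*m+2) (5*m+3) := hi
      rw [Finset.mem_Ico] at hi'
      simp only [xx]
      rw [if_pos (by omega)]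
  have h2 : (Finset.Ico (5*m+3) (6*m+4)).val.map (xx m)
      = Multiset.replicate (m+1) (-1:ℝ) := by
    rw [Multiset.map_congr rfl (g := fun _ => (-1:ℝ)) ?_, Multiset.map_const']
    · congr 1
      have : (Finset.Ico (5*m+3) (6*m+4)).val.card = (Finset.Ico (5*m+3) (6*m+4)).card := rfl
      rw [this, Nat.card_Ico]; omega
    · intro i hi
      have hi' : i ∈ Finset.Ico (5*m+3) (6*m+4) := hi
      rw [Finset.mem_Ico] at hi'
      simp only [xx]
      rw [if_neg (by omega)]
  rw [h1, h2]
  exact medOf_two_replicates m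

lemma interA (m : ℕ) : NN1 m ∩ NN2 m = Finset.Ico (4*m+2) (6*m+4) := by
  ext i
  simp only [NN1, NN2, Finset.mem_inter, Finset.mem_union, Finset.mem_range, Finset.mem_Ico]
  omega

lemma diffA (m : ℕ) : NN1 m \ NN2 m = Finset.range (2*m+1) := by
  ext i
  simp only [NN1, NN2, Finset.mem_sdiff, Finset.mem_union, Finset.mem_range, Finset.mem_Ico]
  omega

lemma cardN1 (m : ℕ) : (NN1 m).card = 4*m+3 := by
  rw [NN1, Finset.card_union_of_disjoint (by
    simp only [Finset.disjoint_left, Finset.mem_range, Finset.mem_Ico]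
    intro i hi
    omega), Finset.card_range, Nat.card_Ico]
  omega

lemma cardN2 (m : ℕ) : (NN2 m).card = 4*m+3 := by
  rw [NN2, Nat.card_Ico]; omega

lemma mechA (hε0 : 0 < ε) (hε1 : ε < 1/2) :
    mechOutput (xx m) (NN1 m) (NN2 m) (CC ε) = (-2 + ε, -2) := by
  unfold mechOutput
  rw [if_pos (by rw [cardN1, cardN2])]
  unfold condMedian
  rw [if_neg (by rw [interA, diffA, Nat.card_Ico, Finset.card_range]; omega)]
  rw [interA, medA]
  simp only [tlocA hε0 hε1, slocA hε0 hε1]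

lemma SC_blocks (m : ℕ) (x : ℕ → ℝ) (N1 N2 : Finset ℕ) (y : ℝ × ℝ) (c1 c2 c3 c4 : ℝ)
    (h1 : ∀ i ∈ Finset.Ico 0 (2*m+1), cost x N1 N2 i y = c1)
    (h2 : ∀ i ∈ Finset.Ico (2*m+1) (4*m+2), cost x N1 N2 i y = c2)
    (h3 : ∀ i ∈ Finset.Ico (4*m+2) (5*m+3), cost x N1 N2 i y = c3)
    (h4 : ∀ i ∈ Finset.Ico (5*m+3) (6*m+4), cost x N1 N2 i y = c4) :
    SC x N1 N2 (Finset.range (6*m+4)) y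
      = (2*m+1 : ℕ) * c1 + (2*m+1 : ℕ) * c2 + (m+1 : ℕ) * c3 + (m+1 : ℕ) * c4 := by
  unfold SC
  rw [Finset.range_eq_Ico,
    sum_four_blocks _ 0 (2*m+1) (4*m+2) (5*m+3) (6*m+4)
      (by omega) (by omega) (by omega) (by omega),
    Finset.sum_congr rfl h1, Finset.sum_congr rfl h2,
    Finset.sum_congr rfl h3, Finset.sum_congr rfl h4,
    Finset.sum_const, Finset.sum_const, Finset.sum_const, Finset.sum_const,
    Nat.card_Ico, Nat.card_Ico, Nat.card_Ico, Nat.card_Ico]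
  have e1 : 2*m+1 - 0 = 2*m+1 := by omega
  have e2 : 4*m+2 - (2*m+1) = 2*m+1 := by omega
  have e3 : 5*m+3 - (4*m+2) = m+1 := by omega
  have e4 : 6*m+4 - (5*m+3) = m+1 := by omega
  rw [e1, e2, e3, e4, nsmul_eq_mul, nsmul_eq_mul, nsmul_eq_mul, nsmul_eq_mul]

lemma mem1 (m i : ℕ) (h : i < 2*m+1) : i ∈ NN1 m ∧ i ∉ NN2 m := by
  constructor
  · simp only [NN1, Finset.mem_union, Finset.mem_range, Finset.mem_Ico]; omega
  · simp only [NN2, Finset.mem_Ico]; omega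

lemma mem2 (m i : ℕ) (hl : 2*m+1 ≤ i) (hr : i < 4*m+2) : i ∉ NN1 m ∧ i ∈ NN2 m := by
  constructor
  · simp only [NN1, Finset.mem_union, Finset.mem_range, Finset.mem_Ico]; omega
  · simp only [NN2, Finset.mem_Ico]; omega

lemma mem34 (m i : ℕ) (hl : 4*m+2 ≤ i) (hr : i < 6*m+4) : i ∈ NN1 m ∧ i ∈ NN2 m := by
  constructor
  · simp only [NN1, Finset.mem_union, Finset.mem_range, Finset.mem_Ico]; omega
  · simp only [NN2, Finset.mem_Ico]; omega

lemma SCw (hε0 : 0 < ε) (hε1 : ε < 1/2) :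
    SC (xx m) (NN1 m) (NN2 m) (Finset.range (6*m+4)) (-2 + ε, -2)
      = (2*m+1 : ℕ) * (2 - ε) + (2*m+1 : ℕ) * 2 + (m+1 : ℕ) * 2 + (m+1 : ℕ) * 1 := by
  apply SC_blocks
  · intro i hi
    rw [Finset.mem_Ico] at hi
    obtain ⟨hm1, hm2⟩ := mem1 m i (by omega)
    unfold cost
    rw [if_pos hm1, if_neg hm2]
    simp only [xx]
    rw [if_pos (by omega : i < 5*m+3)]
    rw [show (0:ℝ) - (-2 + ε, -2).1 = 2 - ε by simp; ring, abs_of_nonneg (by linarith)]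
  · intro i hi
    rw [Finset.mem_Ico] at hi
    obtain ⟨hm1, hm2⟩ := mem2 m i (by omega) (by omega)
    unfold cost
    rw [if_neg hm1]
    simp only [xx]
    rw [if_pos (by omega : i < 5*m+3)]
    rw [show (0:ℝ) - (-2 + ε, -2).2 = 2 by norm_num, abs_of_nonneg (by norm_num)]
  · intro i hi
    rw [Finset.mem_Ico] at hi
    obtain ⟨hm1, hm2⟩ := mem34 m i (by omega) (by omega)
    unfold cost
    rw [if_pos hm1, if_pos hm2]
    simp only [xx]
    rw [if_pos (by omega : i < 5*m+3)]
    rw [show (0:ℝ) - (-2 + ε, -2).1 = 2 - ε by simp; ring,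
      show (0:ℝ) - (-2 + ε, -2).2 = 2 by norm_num,
      abs_of_nonneg (by linarith : (0:ℝ) ≤ 2 - ε), abs_of_nonneg (by norm_num : (0:ℝ) ≤ 2)]
    exact max_eq_right (by linarith)
  · intro i hi
    rw [Finset.mem_Ico] at hi
    obtain ⟨hm1, hm2⟩ := mem34 m i (by omega) (by omega)
    unfold cost
    rw [if_pos hm1, if_pos hm2]
    simp only [xx]
    rw [if_neg (by omega : ¬ i < 5*m+3)]
    rw [show (-1:ℝ) - (-2 + ε, -2).1 = 1 - ε by simp; ring,
      show (-1:ℝ) - (-2 + ε, -2).2 = 1 by simp; ring,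
      abs_of_nonneg (by linarith : (0:ℝ) ≤ 1 - ε), abs_of_nonneg (by norm_num : (0:ℝ) ≤ 1)]
    rw [max_eq_right (by linarith)]

lemma SCy (hε0 : 0 < ε) (hε1 : ε < 1/2) :
    SC (xx m) (NN1 m) (NN2 m) (Finset.range (6*m+4)) ((0:ℝ), ε)
      = (2*m+1 : ℕ) * 0 + (2*m+1 : ℕ) * ε + (m+1 : ℕ) * ε + (m+1 : ℕ) * (1 + ε) := by
  apply SC_blocks
  · intro i hi
    rw [Finset.mem_Ico] at hi
    obtain ⟨hm1, hm2⟩ := mem1 m i (by omega)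
    unfold cost
    rw [if_pos hm1, if_neg hm2]
    simp only [xx]
    rw [if_pos (by omega : i < 5*m+3)]
    simp
  · intro i hi
    rw [Finset.mem_Ico] at hi
    obtain ⟨hm1, hm2⟩ := mem2 m i (by omega) (by omega)
    unfold cost
    rw [if_neg hm1]
    simp only [xx]
    rw [if_pos (by omega : i < 5*m+3)]
    rw [show (0:ℝ) - ((0:ℝ), ε).2 = -ε by simp, abs_neg, abs_of_nonneg hε0.le]
  · intro i hi
    rw [Finset.mem_Ico] at hi
    obtain ⟨hm1, hm2⟩ := mem34 m i (by omega) (by omega)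
    unfold cost
    rw [if_pos hm1, if_pos hm2]
    simp only [xx]
    rw [if_pos (by omega : i < 5*m+3)]
    rw [show (0:ℝ) - ((0:ℝ), ε).1 = 0 by simp, show (0:ℝ) - ((0:ℝ), ε).2 = -ε by simp,
      abs_zero, abs_neg, abs_of_nonneg hε0.le]
    exact max_eq_right hε0.le
  · intro i hi
    rw [Finset.mem_Ico] at hi
    obtain ⟨hm1, hm2⟩ := mem34 m i (by omega) (by omega)
    unfold cost
    rw [if_pos hm1, if_pos hm2]
    simp only [xx]
    rw [if_neg (by omega : ¬ i < 5*m+3)]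
    rw [show (-1:ℝ) - ((0:ℝ), ε).1 = -1 by simp, show (-1:ℝ) - ((0:ℝ), ε).2 = -(1+ε) by simp; ring,
      abs_neg, abs_neg, abs_one, abs_of_nonneg (by linarith : (0:ℝ) ≤ 1 + ε)]
    exact max_eq_right (by linarith)

end CMTight

/-- The approximation ratio 11 for the social cost is tight. -/
theorem conditionalMedian_socialCost_tight (δ : ℝ) (hδ0 : 0 < δ) (hδ1 : δ < 1) :
    ∃ (N N1 N2 : Finset ℕ) (x : ℕ → ℝ) (C : Finset ℝ) (y1 y2 : ℝ),
      N.Nonempty ∧ N1.Nonempty ∧ N2.Nonempty ∧ N1 ∪ N2 = N ∧ 2 ≤ C.card ∧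
      y1 ∈ C ∧ y2 ∈ C ∧ y1 ≠ y2 ∧ 0 < SC x N1 N2 N (y1, y2) ∧
      (11 - δ) * SC x N1 N2 N (y1, y2) ≤ SC x N1 N2 N (mechOutput x N1 N2 C) := by
  classical
  set m : ℕ := ⌈(9:ℝ)/δ⌉₊ with hm
  have hM0 : (0:ℝ) ≤ (m:ℝ) := Nat.cast_nonneg m
  have hm9 : (9:ℝ) ≤ δ * m := by
    have h := Nat.le_ceil ((9:ℝ)/δ)
    rw [div_le_iff₀ hδ0] at h
    calc (9:ℝ) ≤ (⌈(9:ℝ)/δ⌉₊ : ℝ) * δ := h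
    _ = δ * m := by rw [hm]; ring
  set ε : ℝ := 1/(46*(m:ℝ)+34) with hε
  have hden : (0:ℝ) < 46*(m:ℝ)+34 := by linarith
  have hε0 : 0 < ε := by rw [hε]; positivity
  have hε1 : ε < 1/2 := by
    rw [hε]
    rw [div_lt_div_iff₀ hden (by norm_num : (0:ℝ) < 2)]
    linarith
  have hεeq : ε * (46*(m:ℝ)+34) = 1 := by
    rw [hε]; field_simp
  refine ⟨Finset.range (6*m+4), CMTight.NN1 m, CMTight.NN2 m, CMTight.xx m,
    CMTight.CC ε, 0, ε, ?_, ?_, ?_, ?_, ?_, ?_, ?_, ?_, ?_, ?_⟩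
  · exact ⟨0, Finset.mem_range.mpr (by omega)⟩
  · exact ⟨0, by simp only [CMTight.NN1, Finset.mem_union, Finset.mem_range]; omega⟩
  · exact ⟨2*m+1, by simp only [CMTight.NN2, Finset.mem_Ico]; omega⟩
  · ext i
    simp only [CMTight.NN1, CMTight.NN2, Finset.mem_union, Finset.mem_range, Finset.mem_Ico]
    omega
  · refine Finset.one_lt_card.mpr ⟨0, ?_, ε, ?_, hε0.ne⟩
    · simp [CMTight.CC]
    · simp [CMTight.CC]
  · simp [CMTight.CC]
  · simp [CMTight.CC]
  · exact hε0.ne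
  · rw [CMTight.SCy hε0 hε1]
    have h1 : (0:ℝ) < ((m:ℕ)+1 : ℕ) * (1 + ε) := by
      push_cast
      nlinarith
    push_cast
    push_cast at h1
    nlinarith
  · rw [CMTight.SCy hε0 hε1, CMTight.mechA hε0 hε1, CMTight.SCw hε0 hε1]
    push_cast
    nlinarith [hm9, hεeq, mul_nonneg (mul_nonneg hδ0.le hε0.le) hM0,
      mul_nonneg hδ0.le hε0.le, mul_nonneg hε0.le hM0]
end
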